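/- (Fitting's lemma.) Let k be a field, V a finite-dimensional k-vector space, and f : V →ₗ[k] V a linear endomorphism. Let E = ⨅_{n ∈ ℕ} range(f^n) be the eventual image and K = ⨆_{n ∈ ℕ} ker(f^n) the eventual kernel. Then: (i) E and K are complementary submodules of V (IsCompl E K); (ii) f restricts to a bijection of E onto itself (Set.BijOn f E E); (iii) f is nilpotent on K: there exists m such that f^m(x) = 0 for all x ∈ K; and (iv) this decomposition is unique: if E', K' are complementary f-invariant submodules such that f restricts to a bijection of E' onto itself and f is nilpotent on K', then E' = E and K' = K. -/

import Mathlib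

open LinearMap

private lemma compl_unique_aux {α : Type*} [Lattice α] [BoundedOrder α] [IsModularLattice α]
    {a b a' b' : α} (h : IsCompl a b) (h' : IsCompl a' b') (ha : a' ≤ a) (hb : b' ≤ b) :
    a' = a ∧ b' = b := by
  have key : ∀ {x y x' y' : α}, IsCompl x y → IsCompl x' y' → x' ≤ x → y' ≤ y → x' = x := by
    intro x y x' y' h h' hx hy
    refine le_antisymm ?_ hx |>.symm
    calc x = x ⊓ (y' ⊔ x') := by rw [sup_comm, h'.codisjoint.eq_top, inf_top_eq]
    _ = x ⊓ y' ⊔ x' := (inf_sup_assoc_of_le _ hx).symm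
    _ ≤ x ⊓ y ⊔ x' := sup_le_sup_right (inf_le_inf_left x hy) x'
    _ = x' := by rw [h.disjoint.eq_bot, bot_sup_eq]
  exact ⟨key h h' ha hb, key h.symm h'.symm hb ha⟩

section Aux

variable {k : Type*} [Field k] {V : Type*} [AddCommGroup V] [Module k V]
    [FiniteDimensional k V] (f : V →ₗ[k] V)

private lemma fitting_map_E :
    Submodule.map f (⨅ m : ℕ, LinearMap.range (f ^ m)) = ⨅ m : ℕ, LinearMap.range (f ^ m) := by
  obtain ⟨l, hl⟩ := Filter.eventually_atTop.mp f.eventually_iInf_range_pow_eq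
  have h1 := hl l le_rfl
  have h2 := hl (l + 1) (Nat.le_succ l)
  rw [h1, ← range_comp, ← Module.End.mul_eq_comp, ← pow_succ', ← h2, h1]

end Aux

/-- Fitting's lemma: for an endomorphism `f` of a finite-dimensional vector space `V`,
the eventual image `E = ⨅ n, range (f ^ n)` and the eventual kernel
`K = ⨆ n, ker (f ^ n)` are complementary, `f` restricts to a bijection of `E` and is
nilpotent on `K`, and this is the unique such decomposition. -/
theorem fitting_lemma (k : Type*) [Field k] (V : Type*) [AddCommGroup V] [Module k V]
    [FiniteDimensional k V] (f : V →ₗ[k] V) :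
    IsCompl (⨅ n : ℕ, LinearMap.range (f ^ n)) (⨆ n : ℕ, LinearMap.ker (f ^ n)) ∧
    Set.BijOn f (⨅ n : ℕ, LinearMap.range (f ^ n) : Submodule k V)
      (⨅ n : ℕ, LinearMap.range (f ^ n) : Submodule k V) ∧
    (∃ m : ℕ, ∀ x ∈ (⨆ n : ℕ, LinearMap.ker (f ^ n)), (f ^ m) x = 0) ∧
    ∀ E' K' : Submodule k V, IsCompl E' K' →
      Set.BijOn f E' E' → (∀ x ∈ K', f x ∈ K') →
      (∃ m : ℕ, ∀ x ∈ K', (f ^ m) x = 0) →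
      E' = (⨅ n : ℕ, LinearMap.range (f ^ n)) ∧
        K' = (⨆ n : ℕ, LinearMap.ker (f ^ n)) := by
  set E := ⨅ n : ℕ, LinearMap.range (f ^ n) with hEdef
  set K := ⨆ n : ℕ, LinearMap.ker (f ^ n) with hKdef
  have hcompl : IsCompl E K := (f.isCompl_iSup_ker_pow_iInf_range_pow).symm
  have hmapE : Submodule.map f E = E := fitting_map_E f
  have himg : f '' (E : Set V) = (E : Set V) := by
    rw [← Submodule.map_coe, hmapE]
  have hbij : Set.BijOn f (E : Set V) (E : Set V) := by
    refine ⟨fun x hx => by rw [← himg]; exact Set.mem_image_of_mem f hx, ?_,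
      by rw [Set.SurjOn, himg]⟩
    intro x hx y hy hxy
    have hker : LinearMap.ker f ≤ K := fun x hx =>
      Submodule.mem_iSup_of_mem 1 (by simpa [LinearMap.mem_ker] using hx)
    have hsub : x - y ∈ E ⊓ LinearMap.ker f := by
      refine ⟨sub_mem hx hy, ?_⟩
      simp [LinearMap.mem_ker, map_sub, hxy]
    have : x - y ∈ (⊥ : Submodule k V) :=
      hcompl.disjoint.le_bot ⟨hsub.1, hker hsub.2⟩
    simpa [sub_eq_zero] using this
  have hnil : ∃ m : ℕ, ∀ x ∈ K, (f ^ m) x = 0 := by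
    obtain ⟨l, hl⟩ := Filter.eventually_atTop.mp f.eventually_iSup_ker_pow_eq
    exact ⟨l, fun x hx => by rw [hKdef, hl l le_rfl] at hx; exact hx⟩
  refine ⟨hcompl, hbij, hnil, ?_⟩
  rintro E' K' hcompl' hbij' hinv' ⟨m, hm⟩
  have hK' : K' ≤ K := fun x hx => Submodule.mem_iSup_of_mem m (hm x hx)
  have hE' : E' ≤ E := by
    refine le_iInf fun n => ?_
    have hpre : ∀ n : ℕ, ∀ x ∈ E', ∃ y ∈ E', (f ^ n) y = x := by
      intro n
      induction n with
      | zero => exact fun x hx => ⟨x, hx, by simp⟩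
      | succ n ih =>
        intro x hx
        obtain ⟨z, hz, hzx⟩ := hbij'.surjOn hx
        obtain ⟨y, hy, hyz⟩ := ih z hz
        exact ⟨y, hy, by rw [pow_succ', Module.End.mul_apply, hyz, hzx]⟩
    intro x hx
    obtain ⟨y, -, hy⟩ := hpre n x hx
    exact ⟨y, hy⟩
  exact compl_unique_aux hcompl hcompl' hE' hK'
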